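/- arXiv:2511.18809 — 4 statements merged into one kernel-verified Lean document; each statement's English description precedes it below -/
import Mathlib

section
/- Let (F,d) be a differential field of characteristic 0 with d ≠ 0. Then every finite-dimensional differential module (M,D) over F admits a cyclic vector, i.e. an element m ∈ M such that m, D(m), …, D^{n-1}(m) form an F-basis of M, where n = dim_F M. -/
open Finset

namespace CV

variable {F : Type*} [Field F] (d : F →+ F)

lemma d_one (hleib : ∀ a b : F, d (a * b) = a * d b + b * d a) : d 1 = 0 := by
  have := hleib 1 1
  simp at this
  exact this

lemma d_natCast (hleib : ∀ a b : F, d (a * b) = a * d b + b * d a) (n : ℕ) :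
    d (n : F) = 0 := by
  induction n with
  | zero => simp
  | succ n ih => push_cast; rw [map_add, ih, d_one d hleib]; ring

variable {M : Type*} [AddCommGroup M] [Module F M]

/-- auxiliary coefficients for the iterated Leibniz rule -/
def w (D : M →+ M) (y : M) : ℕ → ℕ → M
  | 0 => fun t => if t = 0 then y else 0
  | (i+1) => fun t => D (w D y i t) + if t = 0 then 0 else w D y i (t-1)

variable (D : M →+ M) (y : M)

lemma w_zero (t : ℕ) : w D y 0 t = if t = 0 then y else 0 := rfl

lemma w_succ (i t : ℕ) :
    w D y (i+1) t = D (w D y i t) + if t = 0 then 0 else w D y i (t-1) := rfl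

lemma w_gt : ∀ i t, i < t → w D y i t = 0 := by
  intro i
  induction i with
  | zero => intro t ht; rw [w_zero, if_neg (by omega)]
  | succ i ih =>
      intro t ht
      rw [w_succ, ih t (by omega)]
      rcases Nat.eq_zero_or_pos t with h0 | h0
      · omega
      · rw [if_neg (by omega), ih (t-1) (by omega)]
        simp

lemma w_self : ∀ i, w D y i i = y := by
  intro i
  induction i with
  | zero => simp [w_zero]
  | succ i ih =>
      rw [w_succ, w_gt D y i (i+1) (by omega), if_neg (Nat.succ_ne_zero i)]
      simpa using ih

lemma w_pred : ∀ i, w D y (i+1) i = (i+1) • D y := by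
  intro i
  induction i with
  | zero => simp [w_succ, w_zero, w_self]
  | succ i ih =>
      show w D y (i+2) (i+1) = _
      rw [w_succ, w_self, if_neg (Nat.succ_ne_zero i), Nat.add_sub_cancel, ih]
      rw [add_comm, ← succ_nsmul]

lemma w_spec (hD : ∀ (a : F) (x : M), D (a • x) = a • D x + d a • x) :
    ∀ i (a : F), (⇑D)^[i] (a • y) = ∑ t ∈ Finset.range (i+1), d^[t] a • w D y i t := by
  intro i
  induction i with
  | zero => intro a; simp [w_zero]
  | succ i ih =>
      intro a
      rw [Function.iterate_succ_apply', ih, map_sum]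
      have hterm : ∀ t, D (d^[t] a • w D y i t)
          = d^[t] a • D (w D y i t) + d^[t+1] a • w D y i t := by
        intro t
        rw [hD, Function.iterate_succ_apply']
      simp only [hterm]
      rw [Finset.sum_add_distrib]
      have h1 : ∑ t ∈ range (i+1), d^[t] a • D (w D y i t)
          = ∑ t ∈ range (i+2), d^[t] a • D (w D y i t) := by
        rw [Finset.sum_range_succ (fun t => d^[t] a • D (w D y i t)) (i+1)]
        rw [w_gt D y i (i+1) (by omega)]
        simp
      have h2 : ∑ t ∈ range (i+1), d^[t+1] a • w D y i t
          = ∑ t ∈ range (i+2), d^[t] a • (if t = 0 then 0 else w D y i (t-1)) := by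
        rw [Finset.sum_range_succ' (fun t => d^[t] a • (if t = 0 then 0 else w D y i (t-1))) (i+1)]
        simp
      rw [h1, h2, ← Finset.sum_add_distrib]
      apply Finset.sum_congr rfl
      intro t _
      rw [w_succ, smul_add]

end CV


open Finset

namespace CV2

variable {F : Type*} [Field F] [CharZero F] (d : F →+ F)
  (hleib : ∀ a b : F, d (a * b) = a * d b + b * d a)

-- `d` as a twisted-Leibniz operator on `F` itself
lemma hD_self (hleib : ∀ a b : F, d (a * b) = a * d b + b * d a) :
    ∀ (a x : F), d (a • x) = a • d x + d a • x := by
  intro a x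
  simp only [smul_eq_mul]
  rw [hleib a x, mul_comm x (d a)]

variable {V : Type*} [AddCommGroup V] [Module F V]

lemma indep_iter (hleib : ∀ a b : F, d (a * b) = a * d b + b * d a) (c : F) (hc : d c ≠ 0) :
    ∀ k (x : ℕ → V), (∀ a : F, ∑ s ∈ range (k+1), d^[s] a • x s = 0) → x k = 0 := by
  intro k
  induction k with
  | zero =>
      intro x hx
      have := hx 1
      simpa using this
  | succ k ih =>
      intro x hx
      set W : ℕ → ℕ → F := CV.w d c with hW
      -- the lower-order relation coefficients
      set z : ℕ → V := fun t => (∑ s ∈ range (k+2), W s t • x s) - c • x t with hz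
      have hrel : ∀ a : F, ∑ t ∈ range (k+2), d^[t] a • z t = 0 := by
        intro a
        have h1 : ∑ s ∈ range (k+2), d^[s] (a * c) • x s = 0 := hx (a * c)
        have hsc : ∀ s ∈ range (k+2), d^[s] (a * c)
            = ∑ t ∈ range (k+2), d^[t] a * W s t := by
          intro s hs
          rw [show a * c = a • c from rfl, CV.w_spec d d c (hD_self d hleib) s a]
          simp only [smul_eq_mul]
          rw [Finset.sum_subset (Finset.range_subset_range.2 (show s+1 ≤ k+2 by simp only [Finset.mem_range] at hs; omega))]
          intro t _ ht
          rw [CV.w_gt d c s t (by simp at ht ⊢; omega)]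
          simp
        have h2 : ∑ s ∈ range (k+2), (∑ t ∈ range (k+2), d^[t] a * W s t) • x s = 0 := by
          rw [← h1]; exact Finset.sum_congr rfl (fun s hs => by rw [← hsc s hs])
        have h3 : ∑ t ∈ range (k+2), d^[t] a • (∑ s ∈ range (k+2), W s t • x s) = 0 := by
          have e1 : ∑ t ∈ range (k+2), d^[t] a • (∑ s ∈ range (k+2), W s t • x s)
              = ∑ t ∈ range (k+2), ∑ s ∈ range (k+2), (d^[t] a * W s t) • x s := by
            refine Finset.sum_congr rfl fun t _ => ?_
            rw [Finset.smul_sum]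
            exact Finset.sum_congr rfl fun s _ => smul_smul _ _ _
          rw [e1, Finset.sum_comm, ← h2]
          refine Finset.sum_congr rfl fun s _ => ?_
          rw [Finset.sum_smul]
        have h4 : ∑ t ∈ range (k+2), d^[t] a • (c • x t) = 0 := by
          have : ∀ t, d^[t] a • (c • x t) = c • (d^[t] a • x t) := fun t => smul_comm _ _ _
          simp only [this]
          rw [← Finset.smul_sum, hx a, smul_zero]
        simp only [hz, smul_sub]
        rw [Finset.sum_sub_distrib, h3, h4, sub_zero]
      -- drop the top (vanishing) coefficient
      have hztop : z (k+1) = 0 := by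
        simp only [hz]
        rw [Finset.sum_range_succ]
        have : ∀ s ∈ range (k+1), W s (k+1) • x s = 0 := by
          intro s hs
          rw [hW, CV.w_gt d c s (k+1) (by simp at hs; omega), zero_smul]
        rw [Finset.sum_eq_zero this, zero_add, hW, CV.w_self d c (k+1)]
        simp
      have hrel' : ∀ a : F, ∑ t ∈ range (k+1), d^[t] a • z t = 0 := by
        intro a
        have := hrel a
        rw [Finset.sum_range_succ, hztop, smul_zero, add_zero] at this
        exact this
      have hzk : z k = 0 := ih z hrel'
      -- compute z k
      have hcomp : z k = ((k+1 : ℕ) • d c) • x (k+1) := by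
        simp only [hz]
        rw [Finset.sum_range_succ, Finset.sum_range_succ]
        have : ∀ s ∈ range k, W s k • x s = 0 := by
          intro s hs
          rw [hW, CV.w_gt d c s k (by simp at hs; omega), zero_smul]
        rw [Finset.sum_eq_zero this, zero_add, hW, CV.w_self d c k, CV.w_pred d c k]
        abel
      rw [hcomp] at hzk
      have hne : ((k+1 : ℕ) • d c) ≠ 0 := by
        rw [nsmul_eq_mul]
        exact mul_ne_zero (Nat.cast_ne_zero.2 (Nat.succ_ne_zero k)) hc
      exact (smul_eq_zero.mp hzk).resolve_left hne

end CV2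


open Finset

namespace CV3

variable {F : Type*} [Field F] [CharZero F]
variable {M : Type*} [AddCommGroup M] [Module F M]

/-- coefficient extraction: if `f (a + q • b) = 0` for all naturals `q`, then the
linear-in-`b` coefficient vanishes. -/
lemma c1_vanish {r : ℕ} (f : AlternatingMap F M F (Fin r)) (a b : Fin r → M)
    (hvan : ∀ q : ℕ, f (fun i => a i + (q : F) • b i) = 0) :
    ∑ i : Fin r, f (Function.update a i (b i)) = 0 := by
  classical
  set p : Polynomial F :=
    ∑ S : Finset (Fin r), Polynomial.C (f (S.piecewise b a)) * Polynomial.X ^ S.card with hp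
  have heval : ∀ q : ℕ, p.eval ((q : F)) = 0 := by
    intro q
    have hexp : f (fun i => a i + (q : F) • b i)
        = ∑ S : Finset (Fin r), ((q : F)) ^ S.card * f (S.piecewise b a) := by
      have h0 : (fun i => a i + (q : F) • b i) = ((q : F) • b) + a := by
        funext i; simp [add_comm]
      rw [h0]
      rw [show (f (((q:F) • b) + a) : F) = f.toMultilinearMap (((q:F) • b) + a) from rfl]
      rw [MultilinearMap.map_add_univ]
      refine Finset.sum_congr rfl fun S _ => ?_
      have h1 : S.piecewise ((q:F) • b) a
          = S.piecewise (fun i => (q:F) • (S.piecewise b a) i) (S.piecewise b a) := by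
        ext i
        by_cases hi : i ∈ S
        · simp [Finset.piecewise_eq_of_mem _ _ _ hi]
        · simp [Finset.piecewise_eq_of_notMem _ _ _ hi]
      rw [h1, MultilinearMap.map_piecewise_smul]
      simp [Finset.prod_const, smul_eq_mul]
    have := hvan q
    rw [hexp] at this
    rw [hp]
    rw [Polynomial.eval_finset_sum]
    simp only [Polynomial.eval_mul, Polynomial.eval_C, Polynomial.eval_pow, Polynomial.eval_X]
    rw [← this]
    exact Finset.sum_congr rfl fun S _ => mul_comm _ _
  have hp0 : p = 0 := by
    apply Polynomial.eq_zero_of_infinite_isRoot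
    apply Set.infinite_of_injective_forall_mem (f := fun q : ℕ => (q : F))
      (Nat.cast_injective)
    intro q
    exact heval q
  have hc1 : p.coeff 1 = 0 := by rw [hp0]; simp
  rw [hp, Polynomial.finset_sum_coeff] at hc1
  simp only [Polynomial.coeff_C_mul, Polynomial.coeff_X_pow] at hc1
  have himg : (Finset.univ.filter fun S : Finset (Fin r) => (1 : ℕ) = S.card)
      = Finset.univ.image (fun i : Fin r => ({i} : Finset (Fin r))) := by
    ext S
    simp only [Finset.mem_filter, Finset.mem_univ, true_and, Finset.mem_image]
    constructor
    · intro h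
      obtain ⟨i, rfl⟩ := Finset.card_eq_one.mp h.symm
      exact ⟨i, rfl⟩
    · rintro ⟨i, rfl⟩
      simp
  have : ∑ S : Finset (Fin r), (if (1:ℕ) = S.card then f (S.piecewise b a) else 0) = 0 :=
    (Finset.sum_congr rfl fun S _ => by rw [mul_ite, mul_one, mul_zero]).trans hc1
  rw [← Finset.sum_filter, himg, Finset.sum_image
    (fun i _ j _ h => Finset.singleton_injective h)] at this
  rw [← this]
  refine Finset.sum_congr rfl fun i _ => ?_
  rw [Finset.piecewise_singleton]

/-- a linearly independent family can be detected by an alternating form -/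
lemma exists_alt [FiniteDimensional F M] {r : ℕ} (v : Fin r → M)
    (hv : LinearIndependent F v) :
    ∃ f : AlternatingMap F M F (Fin r), f v = 1 := by
  classical
  set Wx := Submodule.span F (Set.range v) with hWx
  let B : Module.Basis (Fin r) F Wx := Module.Basis.span hv
  obtain ⟨Q, hQ⟩ := Submodule.exists_isCompl Wx
  let proj : M →ₗ[F] Wx := Submodule.projectionOnto _ _ hQ
  let φ : M →ₗ[F] (Fin r → F) := (B.equivFun).toLinearMap.comp proj
  refine ⟨(Matrix.detRowAlternating).compLinearMap φ, ?_⟩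
  rw [AlternatingMap.compLinearMap_apply]
  have hmat : (fun i => φ (v i)) = (1 : Matrix (Fin r) (Fin r) F) := by
    funext i j
    have hmem : v i ∈ Wx := Submodule.subset_span ⟨i, rfl⟩
    have h1 : proj (v i) = ⟨v i, hmem⟩ := by
      have := Submodule.projectionOnto_apply_left hQ ⟨v i, hmem⟩
      simpa [proj] using this
    have h2 : (⟨v i, hmem⟩ : Wx) = B i := by
      apply Subtype.ext
      rw [Module.Basis.span_apply]
    simp only [φ, LinearMap.comp_apply, h1, h2, LinearEquiv.coe_toLinearMap]
    rw [Module.Basis.equivFun_self]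
    simp [Matrix.one_apply]
  show Matrix.detRowAlternating (fun i => φ (v i)) = 1
  rw [hmat]
  exact Matrix.det_one

end CV3


open Finset

namespace CV4

variable {F : Type*} [Field F] [CharZero F] (d : F →+ F)
variable {M : Type*} [AddCommGroup M] [Module F M]
variable (D : M →+ M)

lemma iter_add_smul_const (hD : ∀ (a : F) (x : M), D (a • x) = a • D x + d a • x)
    (q : F) (hq : d q = 0) :
    ∀ (i : ℕ) (x y : M), (⇑D)^[i] (x + q • y) = (⇑D)^[i] x + q • (⇑D)^[i] y := by
  intro i
  induction i with
  | zero => intro x y; simp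
  | succ i ih =>
      intro x y
      rw [Function.iterate_succ_apply', ih, map_add, hD, hq,
        Function.iterate_succ_apply', Function.iterate_succ_apply']
      rw [zero_smul, add_zero]

lemma key [FiniteDimensional F M]
    (hleib : ∀ a b : F, d (a * b) = a * d b + b * d a)
    (hD : ∀ (a : F) (x : M), D (a • x) = a • D x + d a • x)
    (k : ℕ) (m : M)
    (hmax : ∀ v : M, ¬ LinearIndependent F (fun i : Fin (k+1) => (⇑D)^[(i:ℕ)] v))
    (he : LinearIndependent F (fun l : Fin k => (⇑D)^[(l:ℕ)] m))
    (β : Fin k → F)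
    (hβ : (⇑D)^[k] m = ∑ l : Fin k, β l • (⇑D)^[(l:ℕ)] m)
    (u : M) :
    ((⇑D)^[k] u - ∑ l : Fin k, β l • (⇑D)^[(l:ℕ)] u) ∈
      Submodule.span F (Set.range (fun l : Fin k => (⇑D)^[(l:ℕ)] m)) := by
  classical
  set e : Fin k → M := fun l => (⇑D)^[(l:ℕ)] m with hedef
  by_contra hxu
  set x : M := (⇑D)^[k] u - ∑ l : Fin k, β l • (⇑D)^[(l:ℕ)] u with hx
  have hxLI : LinearIndependent F (Fin.snoc e x : Fin (k+1) → M) :=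
    linearIndependent_fin_snoc.2 ⟨he, hxu⟩
  obtain ⟨f, hf1⟩ := CV3.exists_alt _ hxLI
  set a : Fin (k+1) → M := fun i => (⇑D)^[(i:ℕ)] m with ha
  set b : Fin (k+1) → M := fun i => (⇑D)^[(i:ℕ)] u with hb
  have hvan : ∀ q : ℕ, f (fun i => a i + (q:F) • b i) = 0 := by
    intro q
    have hdq : d ((q:F)) = 0 := CV.d_natCast d hleib q
    have hiter : ∀ i : Fin (k+1), a i + (q:F) • b i = (⇑D)^[(i:ℕ)] (m + (q:F) • u) :=
      fun i => (iter_add_smul_const d D hD (q:F) hdq (i:ℕ) m u).symm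
    rw [show (fun i => a i + (q:F) • b i) = fun i : Fin (k+1) => (⇑D)^[(i:ℕ)] (m + (q:F) • u)
      from funext hiter]
    exact f.map_linearDependent _ (hmax _)
  have hc1 := CV3.c1_vanish f a b hvan
  rw [Fin.sum_univ_castSucc] at hc1
  have hlast : Function.update a (Fin.last k) (b (Fin.last k)) = Fin.snoc e ((⇑D)^[k] u) := by
    funext p
    refine Fin.lastCases ?_ (fun j => ?_) p
    · rw [Function.update_self, Fin.snoc_last]; rfl
    · rw [Function.update_of_ne (Fin.castSucc_lt_last j).ne, Fin.snoc_castSucc]; rfl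
  have hterm : ∀ l : Fin k, f (Function.update a (Fin.castSucc l) (b (Fin.castSucc l)))
      = -(β l • f (Fin.snoc e ((⇑D)^[(l:ℕ)] u))) := by
    intro l
    set g := Function.update a (Fin.castSucc l) (b (Fin.castSucc l)) with hg
    have hglast : g (Fin.last k) = (⇑D)^[k] m := by
      rw [hg, Function.update_of_ne (Fin.castSucc_lt_last l).ne']; rfl
    have e1 : f g = f (Function.update g (Fin.last k) ((⇑D)^[k] m)) := by
      rw [← hglast, Function.update_eq_self]
    rw [e1, hβ, f.map_update_sum Finset.univ (Fin.last k)
      (fun j : Fin k => β j • (⇑D)^[(j:ℕ)] m) g]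
    have hzero : ∀ j : Fin k, j ∈ Finset.univ → j ≠ l →
        f (Function.update g (Fin.last k) (β j • (⇑D)^[(j:ℕ)] m)) = 0 := by
      intro j _ hj
      rw [f.map_update_smul]
      have heq2 : Function.update g (Fin.last k) ((⇑D)^[(j:ℕ)] m) (Fin.castSucc j)
          = Function.update g (Fin.last k) ((⇑D)^[(j:ℕ)] m) (Fin.last k) := by
        rw [Function.update_self, Function.update_of_ne (Fin.castSucc_lt_last j).ne, hg,
          Function.update_of_ne (fun h => hj (Fin.castSucc_injective k h))]
        rfl
      rw [f.map_eq_zero_of_eq _ heq2 (Fin.castSucc_lt_last j).ne, smul_zero]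
    rw [Finset.sum_eq_single l hzero (fun h => absurd (Finset.mem_univ l) h)]
    rw [f.map_update_smul]
    have hswap : Function.update g (Fin.last k) ((⇑D)^[(l:ℕ)] m)
        = (Fin.snoc e ((⇑D)^[(l:ℕ)] u) : Fin (k+1) → M) ∘ Equiv.swap (Fin.castSucc l) (Fin.last k) := by
      funext p
      rcases eq_or_ne p (Fin.castSucc l) with rfl | hp1
      · rw [Function.update_of_ne (Fin.castSucc_lt_last l).ne, hg, Function.update_self]
        simp only [Function.comp_apply, Equiv.swap_apply_left, Fin.snoc_last]
        rfl
      rcases eq_or_ne p (Fin.last k) with rfl | hp2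
      · rw [Function.update_self]
        simp only [Function.comp_apply, Equiv.swap_apply_right, Fin.snoc_castSucc]
        rfl
      · rw [Function.update_of_ne hp2, hg, Function.update_of_ne hp1]
        rw [Function.comp_apply, Equiv.swap_apply_of_ne_of_ne hp1 hp2]
        obtain ⟨j, rfl⟩ := Fin.exists_castSucc_eq.2 hp2
        rw [Fin.snoc_castSucc]
        rfl
    rw [hswap, AlternatingMap.map_swap f _ ((Fin.castSucc_lt_last l).ne), smul_neg]
  simp only [hterm] at hc1
  rw [hlast] at hc1
  -- now compute f (snoc e x)
  have hsnoc_up : ∀ z : M, (Fin.snoc e z : Fin (k+1) → M)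
      = Function.update (Fin.snoc e (0:M)) (Fin.last k) z := by
    intro z; funext p
    refine Fin.lastCases ?_ (fun j => ?_) p
    · rw [Fin.snoc_last, Function.update_self]
    · rw [Fin.snoc_castSucc, Function.update_of_ne (Fin.castSucc_lt_last j).ne,
        Fin.snoc_castSucc]
  have hfx : f (Fin.snoc e x) = 0 := by
    rw [hsnoc_up, hx, f.map_update_sub, f.map_update_sum Finset.univ (Fin.last k)
      (fun l : Fin k => β l • (⇑D)^[(l:ℕ)] u) (Fin.snoc e (0:M))]
    have : ∀ l : Fin k, f (Function.update (Fin.snoc e (0:M)) (Fin.last k)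
        (β l • (⇑D)^[(l:ℕ)] u)) = β l • f (Fin.snoc e ((⇑D)^[(l:ℕ)] u)) := by
      intro l
      rw [f.map_update_smul, ← hsnoc_up]
    simp only [this]
    rw [← hsnoc_up]
    -- hc1 : ∑ l, -(β l • f (snoc e (D^l u))) + f (snoc e (D^k u)) = 0
    rw [Finset.sum_neg_distrib] at hc1
    linear_combination hc1
  rw [hf1] at hfx
  exact one_ne_zero hfx

end CV4



/-- **Cyclic vector theorem.** Over a differential field `(F, d)` of
characteristic `0` with `d ≠ 0`, every finite-dimensional differential module
`(M, D)` admits a cyclic vector `m`: the iterates `m, D m, …, D^{n-1} m`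
(`n = dim_F M`) form a basis of `M`. -/
theorem exists_cyclic_vector
    {F M : Type*} [Field F] [CharZero F]
    (d : F →+ F) (hleib : ∀ a b : F, d (a * b) = a * d b + b * d a) (hd : d ≠ 0)
    [AddCommGroup M] [Module F M] [FiniteDimensional F M]
    (D : M →+ M) (hD : ∀ (a : F) (x : M), D (a • x) = a • D x + d a • x) :
    ∃ m : M,
      LinearIndependent F (fun i : Fin (Module.finrank F M) => (⇑D)^[(i : ℕ)] m) ∧
      Submodule.span F (Set.range (fun i : Fin (Module.finrank F M) => (⇑D)^[(i : ℕ)] m)) = ⊤ := by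
  classical
  set n := Module.finrank F M with hn
  set P : ℕ → Prop := fun j => ∃ v : M, LinearIndependent F (fun i : Fin j => (⇑D)^[(i:ℕ)] v)
    with hP
  have hP0 : P 0 := ⟨0, linearIndependent_empty_type⟩
  have hPle : ∀ j, P j → j ≤ n := by
    rintro j ⟨v, hv⟩
    simpa using hv.fintype_card_le_finrank
  set k := Nat.findGreatest P n with hk
  have hPk : P k := Nat.findGreatest_spec (Nat.zero_le n) hP0
  obtain ⟨m, hm⟩ := hPk
  have hkle : k ≤ n := Nat.findGreatest_le n
  by_cases hkn : k = n
  · -- k = n : m is a cyclic vector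
    have hm' : LinearIndependent F (fun i : Fin n => (⇑D)^[(i:ℕ)] m) := by
      rw [← hkn]; exact hm
    refine ⟨m, hm', ?_⟩
    rcases Nat.eq_zero_or_pos n with h0 | h0
    · have hsub : Subsingleton M := by
        rw [hn] at h0
        exact Module.finrank_zero_iff.mp h0
      have : Subsingleton (Submodule F M) := Submodule.subsingleton_iff F |>.mpr hsub
      exact Subsingleton.elim _ _
    · have hne : Nonempty (Fin n) := ⟨⟨0, h0⟩⟩
      let B := basisOfLinearIndependentOfCardEqFinrank hm' (by simp [hn])
      have hB : ⇑B = fun i : Fin n => (⇑D)^[(i:ℕ)] m :=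
        coe_basisOfLinearIndependentOfCardEqFinrank _ _
      rw [← hB]
      exact B.span_eq
  · -- k < n : contradiction
    exfalso
    have hklt : k < n := lt_of_le_of_ne hkle hkn
    have hmax : ∀ v : M, ¬ LinearIndependent F (fun i : Fin (k+1) => (⇑D)^[(i:ℕ)] v) := by
      intro v hv
      have h1 : k + 1 ≤ n := hPle (k+1) ⟨v, hv⟩
      have h2 : k + 1 ≤ k := Nat.le_findGreatest h1 ⟨v, hv⟩
      omega
    have hn0 : 0 < n := by omega
    have : Nontrivial M := by
      rw [hn] at hn0
      exact Module.finrank_pos_iff.mp hn0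
    obtain ⟨v0, hv0⟩ := exists_ne (0 : M)
    have hk1 : 1 ≤ k := by
      apply Nat.le_findGreatest (by omega)
      refine ⟨v0, ?_⟩
      apply linearIndependent_unique_iff.2
      simpa using hv0
    set e : Fin k → M := fun l => (⇑D)^[(l:ℕ)] m with hedef
    have heLI : LinearIndependent F e := hm
    set W := Submodule.span F (Set.range e) with hWdef
    have hsnoc : (fun i : Fin (k+1) => (⇑D)^[(i:ℕ)] m) = Fin.snoc e ((⇑D)^[k] m) := by
      funext p
      refine Fin.lastCases ?_ (fun j => ?_) p
      · rw [Fin.snoc_last]; simp [Fin.val_last]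
      · rw [Fin.snoc_castSucc]; simp [hedef]
    have hDk : (⇑D)^[k] m ∈ W := by
      by_contra hmem
      exact hmax m (by rw [hsnoc]; exact linearIndependent_fin_snoc.2 ⟨heLI, hmem⟩)
    rw [hWdef, Submodule.mem_span_range_iff_exists_fun F] at hDk
    obtain ⟨β, hβ⟩ := hDk
    have hWne : W ≠ ⊤ := by
      intro htop
      have hB : Module.Basis (Fin k) F M := Module.Basis.mk heLI (by rw [hWdef] at htop; rw [htop])
      have hfr := Module.finrank_eq_card_basis hB
      rw [← hn, Fintype.card_fin] at hfr
      omega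
    obtain ⟨y, hy⟩ : ∃ y, y ∉ W := by
      by_contra h
      push_neg at h
      exact hWne (Submodule.eq_top_iff'.2 h)
    have hkey : ∀ u : M, ((⇑D)^[k] u - ∑ l : Fin k, β l • (⇑D)^[(l:ℕ)] u) ∈ W :=
      fun u => CV4.key d D hleib hD k m hmax heLI β hβ.symm u
    set v : ℕ → M := fun t => CV.w D y k t - ∑ l : Fin k, β l • CV.w D y (l:ℕ) t with hv
    have hrel : ∀ a : F, (∑ t ∈ Finset.range (k+1), (⇑d)^[t] a • v t) ∈ W := by
      intro a
      have h1 := CV.w_spec d D y hD k a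
      have h2 : ∀ l : Fin k, (⇑D)^[(l:ℕ)] (a • y)
          = ∑ t ∈ Finset.range (k+1), (⇑d)^[t] a • CV.w D y (l:ℕ) t := by
        intro l
        rw [CV.w_spec d D y hD (l:ℕ) a]
        apply Finset.sum_subset (Finset.range_subset_range.2 (by have := l.isLt; omega))
        intro t ht1 ht2
        rw [CV.w_gt D y (l:ℕ) t (by simp only [Finset.mem_range] at ht1 ht2 ⊢; omega),
          smul_zero]
      have hmem := hkey (a • y)
      have h4 : (⇑D)^[k] (a • y) - ∑ l : Fin k, β l • (⇑D)^[(l:ℕ)] (a • y)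
          = ∑ t ∈ Finset.range (k+1), (⇑d)^[t] a • v t := by
        rw [h1]
        have h3 : ∑ l : Fin k, β l • (⇑D)^[(l:ℕ)] (a • y)
            = ∑ t ∈ Finset.range (k+1), (⇑d)^[t] a •
                (∑ l : Fin k, β l • CV.w D y (l:ℕ) t) := by
          calc ∑ l : Fin k, β l • (⇑D)^[(l:ℕ)] (a • y)
              = ∑ l : Fin k, ∑ t ∈ Finset.range (k+1),
                  (⇑d)^[t] a • (β l • CV.w D y (l:ℕ) t) := by
                refine Finset.sum_congr rfl fun l _ => ?_
                rw [h2 l, Finset.smul_sum]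
                exact Finset.sum_congr rfl fun t _ => smul_comm _ _ _
            _ = ∑ t ∈ Finset.range (k+1), ∑ l : Fin k,
                  (⇑d)^[t] a • (β l • CV.w D y (l:ℕ) t) := Finset.sum_comm
            _ = ∑ t ∈ Finset.range (k+1), (⇑d)^[t] a •
                  (∑ l : Fin k, β l • CV.w D y (l:ℕ) t) := by
                refine Finset.sum_congr rfl fun t _ => ?_
                rw [Finset.smul_sum]
        rw [h3, ← Finset.sum_sub_distrib]
        refine Finset.sum_congr rfl fun t _ => ?_
        rw [← smul_sub]
      rw [h4] at hmem
      exact hmem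
    have hq : ∀ a : F, ∑ t ∈ Finset.range (k+1), (⇑d)^[t] a • (W.mkQ (v t)) = 0 := by
      intro a
      have h5 : W.mkQ (∑ t ∈ Finset.range (k+1), (⇑d)^[t] a • v t) = 0 := by
        rw [Submodule.mkQ_apply, Submodule.Quotient.mk_eq_zero]
        exact hrel a
      rw [map_sum] at h5
      simp only [map_smul] at h5
      exact h5
    obtain ⟨c, hc⟩ : ∃ c, d c ≠ 0 := by
      by_contra h
      push_neg at h
      exact hd (AddMonoidHom.ext h)
    have hfinal : W.mkQ (v k) = 0 := CV2.indep_iter d hleib c hc k (fun t => W.mkQ (v t)) hq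
    have hvk : v k = y := by
      rw [hv]
      simp only
      rw [CV.w_self D y k]
      have hz : ∀ l : Fin k, β l • CV.w D y (l:ℕ) k = 0 := fun l => by
        rw [CV.w_gt D y (l:ℕ) k l.isLt, smul_zero]
      rw [Finset.sum_eq_zero (fun l _ => hz l), sub_zero]
    rw [hvk] at hfinal
    rw [Submodule.mkQ_apply, Submodule.Quotient.mk_eq_zero] at hfinal
    exact hy hfinal
end

section
/- Let p be prime, n coprime to p, a the order of p modulo n, q = p^a, and ζ̄ ∈ F_q^× an element of multiplicative order n. Let G = F_q ⋊ ℤ/nℤ, where i ∈ ℤ/nℤ acts on F_q (as additive group) by multiplication by ζ̄^{-i}. Then every normal subgroup N of G contained in F_q × {0} is either trivial or equal to F_q × {0}. In other words, F_q is an irreducible F_p[ℤ/nℤ]-module under this action. -/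
/-- Let `K = F_q` (`q = p^a`, `a` the order of `p` mod `n`,
`gcd(n,p)=1`) and `ζ ∈ K` of multiplicative order `n`.  In the semidirect
product `G = F_q ⋊ ℤ/nℤ` (with `i` acting by multiplication by `ζ^{-i}`), every
normal subgroup contained in `F_q × {0}` is trivial or all of `F_q × {0}`; in
other words, `F_q` is an irreducible `F_p[ℤ/nℤ]`-module for this action:
every additive subgroup of `K` stable under multiplication by `ζ` is `⊥` or `⊤`. -/
theorem Fq_irreducible_under_zeta
    (p n a : ℕ) (hp : p.Prime) (hn : 0 < n) (hcop : Nat.Coprime n p)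
    (ha : orderOf ((p : ZMod n)) = a)
    (K : Type*) [Field K] [Fintype K] (hK : Fintype.card K = p ^ a)
    (ζ : K) (hζ : orderOf ζ = n) :
    ∀ N : AddSubgroup K, (∀ x ∈ N, ζ * x ∈ N) → N = ⊥ ∨ N = ⊤ := by
  classical
  intro N hNζ
  have ha0 : 0 < a := by
    rcases Nat.eq_zero_or_pos a with h | h
    · exfalso
      rw [h, pow_zero] at hK
      have := Fintype.one_lt_card (α := K)
      omega
    · exact h
  -- char K = p
  haveI : CharP K (ringChar K) := ringChar.charP K
  obtain ⟨m, hrp, hcard⟩ := FiniteField.card K (ringChar K)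
  have hpr : ringChar K = p := by
    have hd : p ∣ (ringChar K) ^ (m : ℕ) := by
      rw [← hcard, hK]; exact dvd_pow_self p ha0.ne'
    have : p ∣ ringChar K := hp.dvd_of_dvd_pow hd
    exact ((Nat.prime_dvd_prime_iff_eq hp hrp).mp this).symm
  haveI : CharP K p := hpr ▸ ringChar.charP K
  have hζ0 : ζ ≠ 0 := by
    intro h
    have h1 : ζ ^ n = 1 := hζ ▸ pow_orderOf_eq_one ζ
    rw [h, zero_pow hn.ne'] at h1
    exact zero_ne_one h1
  -- the subring generated by ζ is all of K
  set F : Subring K := Subring.closure {ζ} with hF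
  haveI : Fintype F := Fintype.ofFinite F
  letI : Field F := (Finite.isField_of_domain F).toField
  haveI : CharP F p := CharP.subring' K p F
  obtain ⟨d, -, hcardF⟩ := FiniteField.card F p
  set ζ' : F := ⟨ζ, Subring.subset_closure rfl⟩ with hζ'def
  have hζ' : orderOf ζ' = n := by
    rw [← hζ]
    exact (orderOf_injective F.subtype.toMonoidHom Subtype.coe_injective ζ').symm
  have hζ'0 : ζ' ≠ 0 := by
    intro h
    apply hζ0
    exact congrArg (Subtype.val) h
  have hnd : n ∣ p ^ (d : ℕ) - 1 := by
    rw [← hcardF, ← hζ']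
    exact orderOf_dvd_of_pow_eq_one (FiniteField.pow_card_sub_one_eq_one ζ' hζ'0)
  have had : a ∣ (d : ℕ) := by
    rw [← ha]
    apply orderOf_dvd_of_pow_eq_one
    have h1 : 1 ≤ p ^ (d : ℕ) := Nat.one_le_pow _ _ hp.pos
    have : (1 : ℕ) ≡ p ^ (d : ℕ) [MOD n] := (Nat.modEq_iff_dvd' h1).mpr hnd
    have := (ZMod.natCast_eq_natCast_iff _ _ _).mpr this
    push_cast at this
    exact this.symm
  have hda : (d : ℕ) ∣ a := by
    have hKF : Fintype.card K = Fintype.card F ^ Module.finrank F K :=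
      Module.card_eq_pow_finrank (K := F) (V := K)
    rw [hK, hcardF, ← pow_mul] at hKF
    have := Nat.pow_right_injective hp.two_le hKF
    exact ⟨Module.finrank F K, this⟩
  have hde : (d : ℕ) = a := Nat.dvd_antisymm hda had
  have hFtop : F = ⊤ := by
    have hcards : Nat.card F = Nat.card K := by
      rw [Nat.card_eq_fintype_card, Nat.card_eq_fintype_card, hcardF, hde, hK]
    apply SetLike.ext'
    apply Set.eq_of_subset_of_ncard_le (Set.subset_univ _) _ Set.finite_univ
    rw [Set.ncard_univ, ← Nat.card_coe_set_eq]
    have h2 : Nat.card ((F : Set K) : Type _) = Nat.card F := rfl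
    rw [h2, hcards]
  -- the stabilizer subring of N
  by_cases hNbot : N = ⊥
  · exact Or.inl hNbot
  right
  obtain ⟨x, hxN, hx0⟩ : ∃ x ∈ N, x ≠ 0 := by
    by_contra h
    push_neg at h
    apply hNbot
    ext y
    simp only [AddSubgroup.mem_bot]
    exact ⟨fun hy => h y hy, fun hy => hy ▸ N.zero_mem⟩
  let S : Subring K :=
    { carrier := {c : K | ∀ y ∈ N, c * y ∈ N}
      mul_mem' := fun {c} {c'} hc hc' y hy => by
        rw [mul_assoc]; exact hc _ (hc' y hy)
      one_mem' := fun y hy => by rwa [one_mul]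
      add_mem' := fun {c} {c'} hc hc' y hy => by
        rw [add_mul]; exact N.add_mem (hc y hy) (hc' y hy)
      zero_mem' := fun y hy => by rw [zero_mul]; exact N.zero_mem
      neg_mem' := fun {c} hc y hy => by
        rw [neg_mul]; exact N.neg_mem (hc y hy) }
  have hζS : ζ ∈ S := fun y hy => hNζ y hy
  have hStop : ∀ c : K, c ∈ S := by
    intro c
    have : F ≤ S := Subring.closure_le.mpr (by simpa using hζS)
    exact this (hFtop ▸ Subring.mem_top c)
  ext y
  simp only [AddSubgroup.mem_top, iff_true]
  have := hStop (y * x⁻¹) x hxN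
  rwa [mul_assoc, inv_mul_cancel₀ hx0, mul_one] at this
end

section
/- Let p be prime, n coprime to p, a the order of p modulo n, q = p^a, and ζ̄ ∈ F_q^× of order n. Let G = F_q ⋊ ℤ/nℤ with i acting by multiplication by ζ̄^{-i}. Then every quotient group of G is isomorphic either to G itself or to a quotient of ℤ/nℤ. Equivalently, every normal subgroup of G either contains F_q × {0} or is trivial. -/
open SemidirectProduct Multiplicative

-- auxiliary: a subfield of K containing an element of order n must be all of K
lemma aux_subfield_top (p n a : ℕ) (hp : p.Prime) (hn : 0 < n) (hcop : Nat.Coprime n p)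
    (ha : orderOf ((p : ZMod n)) = a)
    (K : Type*) [Field K] [Fintype K] (hK : Fintype.card K = p ^ a)
    (ζ : K) (hζ : orderOf ζ = n) (D : Subfield K) (hζD : ζ ∈ D) : D = ⊤ := by
  haveI : NeZero n := ⟨hn.ne'⟩
  have ha0 : 0 < a := by
    obtain ⟨u, hu⟩ := (ZMod.isUnit_iff_coprime p n).mpr hcop.symm
    rw [← ha, ← hu, orderOf_units]
    exact orderOf_pos u
  -- char K = p
  haveI : CharP K p := by
    obtain ⟨m, hr, hcard⟩ := FiniteField.card K (ringChar K)
    have h1 : p ∣ (ringChar K) ^ (m : ℕ) := by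
      rw [← hcard, hK]; exact dvd_pow_self p ha0.ne'
    have h2 : p = ringChar K :=
      (Nat.prime_dvd_prime_iff_eq hp hr).mp (hp.dvd_of_dvd_pow h1)
    exact h2 ▸ ringChar.charP K
  haveI : Fintype ↥D := Fintype.ofFinite _
  haveI : CharP ↥D p := D.subtype.charP Subtype.val_injective p
  obtain ⟨b, -, hbD⟩ := FiniteField.card ↥D p
  -- n divides p^b - 1
  have hζn : ζ ^ n = 1 := by rw [← hζ]; exact pow_orderOf_eq_one ζ
  have hζ0 : ζ ≠ 0 := fun h => by
    rw [h, zero_pow hn.ne'] at hζn; exact zero_ne_one hζn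
  have horder : orderOf (⟨ζ, hζD⟩ : ↥D) = n := by
    rw [← hζ]
    exact (orderOf_injective D.subtype.toMonoidHom Subtype.val_injective ⟨ζ, hζD⟩).symm
  have hpow : (⟨ζ, hζD⟩ : ↥D) ^ (Fintype.card ↥D - 1) = 1 :=
    FiniteField.pow_card_sub_one_eq_one _
      (fun h => hζ0 (by simpa [Subtype.ext_iff] using h))
  have hdvd : n ∣ p ^ (b : ℕ) - 1 := by
    rw [← hbD, ← horder]; exact orderOf_dvd_of_pow_eq_one hpow
  -- hence a ∣ b
  have hab : a ∣ (b : ℕ) := by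
    rw [← ha]
    apply orderOf_dvd_of_pow_eq_one
    have h1 : p ^ (b : ℕ) = (p ^ (b : ℕ) - 1) + 1 :=
      (Nat.succ_pred_eq_of_pos (Nat.one_le_pow _ _ hp.pos)).symm
    have h2 : ((p ^ (b : ℕ) - 1 : ℕ) : ZMod n) = 0 :=
      (ZMod.natCast_eq_zero_iff _ _).mpr hdvd
    calc ((p : ZMod n)) ^ (b : ℕ) = ((p ^ (b : ℕ) : ℕ) : ZMod n) := by push_cast; ring
      _ = (((p ^ (b : ℕ) - 1) + 1 : ℕ) : ZMod n) := by rw [← h1]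
      _ = 1 := by rw [Nat.cast_add, h2, Nat.cast_one, zero_add]
  -- and b ≤ a
  have hba : (b : ℕ) ≤ a := by
    have hcardle : Fintype.card ↥D ≤ Fintype.card K :=
      Fintype.card_le_of_injective _ Subtype.val_injective
    rw [hbD, hK] at hcardle
    exact (Nat.pow_le_pow_iff_right hp.one_lt).mp hcardle
  have hba' : (b : ℕ) = a := le_antisymm hba (Nat.le_of_dvd b.2 hab)
  -- equal cards, so D = ⊤
  have hcards : Fintype.card ↥D = Fintype.card K := by rw [hbD, hK, hba']
  have hsurj : Function.Surjective (D.subtype) :=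
    ((Fintype.bijective_iff_injective_and_card D.subtype).mpr
      ⟨Subtype.val_injective, hcards⟩).surjective
  rw [eq_top_iff]
  intro x _
  obtain ⟨y, hy⟩ := hsurj x
  exact hy ▸ y.2


-- second aux: an AddSubgroup closed under multiplication by ζ⁻¹ containing a nonzero element is everything
lemma aux_S_top (p n a : ℕ) (hp : p.Prime) (hn : 0 < n) (hcop : Nat.Coprime n p)
    (ha : orderOf ((p : ZMod n)) = a)
    (K : Type*) [Field K] [Fintype K] (hK : Fintype.card K = p ^ a)
    (ζ : K) (hζ : orderOf ζ = n)
    (S : AddSubgroup K) (hSζ : ∀ s ∈ S, ζ⁻¹ * s ∈ S)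
    (x : K) (hx : x ∈ S) (hx0 : x ≠ 0) : ∀ y : K, y ∈ S := by
  haveI : NeZero n := ⟨hn.ne'⟩
  let Dr : Subring K :=
    { carrier := {c : K | ∀ s ∈ S, c * s ∈ S}
      one_mem' := fun s hs => by simpa using hs
      mul_mem' := fun {c d} hc hd s hs => by rw [mul_assoc]; exact hc _ (hd _ hs)
      add_mem' := fun {c d} hc hd s hs => by rw [add_mul]; exact S.add_mem (hc _ hs) (hd _ hs)
      zero_mem' := fun s hs => by rw [zero_mul]; exact S.zero_mem
      neg_mem' := fun {c} hc s hs => by rw [neg_mul]; exact S.neg_mem (hc _ hs) }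
  let D : Subfield K :=
    { Dr with
      inv_mem' := by
        intro c hc
        rcases eq_or_ne c 0 with rfl | hc0
        · intro s hs; rw [inv_zero, zero_mul]; exact S.zero_mem
        · have h2 : 2 ≤ Fintype.card K := Fintype.one_lt_card
          have hmul : c * c ^ (Fintype.card K - 2) = 1 := by
            rw [← pow_succ']
            have : Fintype.card K - 2 + 1 = Fintype.card K - 1 := by omega
            rw [this]
            exact FiniteField.pow_card_sub_one_eq_one c hc0
          have hcinv : c⁻¹ = c ^ (Fintype.card K - 2) :=
            inv_eq_of_mul_eq_one_right hmul
          rw [hcinv]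
          exact Dr.pow_mem hc _ }
  have hζD : ζ ∈ D := by
    have h1 : ζ⁻¹ ∈ D := fun s hs => hSζ s hs
    rw [← inv_inv ζ]
    exact D.inv_mem h1
  have hDtop : D = ⊤ := aux_subfield_top p n a hp hn hcop ha K hK ζ hζ D hζD
  intro y
  have hy : y * x⁻¹ ∈ D := hDtop ▸ Subfield.mem_top _
  have := hy x hx
  rwa [inv_mul_cancel_right₀ hx0] at this


lemma aux_conj {Nn Gg : Type*} [CommGroup Nn] [Group Gg] {φ : Gg →* MulAut Nn}
    (g : SemidirectProduct Nn Gg φ) (m : Nn) :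
    g * SemidirectProduct.inl m * g⁻¹ = SemidirectProduct.inl (φ g.right m) := by
  ext
  · simp only [SemidirectProduct.mul_left, SemidirectProduct.mul_right,
      SemidirectProduct.inv_left, SemidirectProduct.inv_right,
      SemidirectProduct.left_inl, SemidirectProduct.right_inl, mul_one, map_mul]
    simp only [map_inv, MulAut.apply_inv_self]
    rw [mul_comm g.left ((φ g.right) m), mul_inv_cancel_right]
  · simp [SemidirectProduct.mul_right, SemidirectProduct.inv_right,
      SemidirectProduct.right_inl]

lemma aux_comm {Nn Gg : Type*} [CommGroup Nn] [Group Gg] {φ : Gg →* MulAut Nn}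
    (g : SemidirectProduct Nn Gg φ) (m : Nn) :
    SemidirectProduct.inl m * g * (SemidirectProduct.inl m)⁻¹ * g⁻¹ =
      SemidirectProduct.inl (m * φ g.right m⁻¹) := by
  rw [← map_inv, mul_assoc (SemidirectProduct.inl m) g,
    mul_assoc (SemidirectProduct.inl m), aux_conj g, ← map_mul]

/-- Let `G = F_q ⋊ ℤ/nℤ` with `i` acting on the additive group
of `F_q` by multiplication by `ζ^{-i}`, where `ζ ∈ F_q^×` has order `n`
(`q = p^a`, `a` the order of `p` mod `n`, `gcd(n,p)=1`).  Then every normal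
subgroup of `G` either is trivial or contains `F_q × {0}`; equivalently, every
quotient of `G` is isomorphic to `G` itself or to a quotient of `ℤ/nℤ`. -/
theorem normal_subgroup_semidirect_trivial_or_contains_Fq
    (p n a : ℕ) (hp : p.Prime) (hn : 0 < n) (hcop : Nat.Coprime n p)
    (ha : orderOf ((p : ZMod n)) = a)
    (K : Type*) [Field K] [Fintype K] (hK : Fintype.card K = p ^ a)
    (ζ : K) (hζ : orderOf ζ = n)
    (φ : Multiplicative (ZMod n) →* MulAut (Multiplicative K))
    (hφ : ∀ (i : ℕ) (x : K),
      φ (Multiplicative.ofAdd ((i : ZMod n))) (Multiplicative.ofAdd x) =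
        Multiplicative.ofAdd (ζ⁻¹ ^ i * x)) :
    ∀ N : Subgroup (SemidirectProduct (Multiplicative K) (Multiplicative (ZMod n)) φ),
      N.Normal → N = ⊥ ∨
        (SemidirectProduct.inl :
          Multiplicative K →* SemidirectProduct (Multiplicative K) (Multiplicative (ZMod n)) φ).range ≤ N := by
  intro N hN
  by_cases hbot : N = ⊥
  · exact Or.inl hbot
  right
  haveI : NeZero n := ⟨hn.ne'⟩
  -- the additive subgroup of K corresponding to N ∩ inl(K)
  let S : AddSubgroup K :=
    { carrier := {x : K | SemidirectProduct.inl (Multiplicative.ofAdd x) ∈ N}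
      zero_mem' := by
        show SemidirectProduct.inl (Multiplicative.ofAdd (0 : K)) ∈ N
        rw [ofAdd_zero, map_one]; exact N.one_mem
      add_mem' := by
        intro u v hu hv
        show SemidirectProduct.inl (Multiplicative.ofAdd (u + v)) ∈ N
        rw [ofAdd_add, map_mul]; exact N.mul_mem hu hv
      neg_mem' := by
        intro u hu
        show SemidirectProduct.inl (Multiplicative.ofAdd (-u)) ∈ N
        rw [ofAdd_neg, map_inv]; exact N.inv_mem hu }
  have hSζ : ∀ s ∈ S, ζ⁻¹ * s ∈ S := by
    intro s hs
    show SemidirectProduct.inl (Multiplicative.ofAdd (ζ⁻¹ * s)) ∈ N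
    have h1 : (ζ⁻¹ : K) * s = ζ⁻¹ ^ 1 * s := by rw [pow_one]
    rw [h1, ← hφ 1 s]
    rw [SemidirectProduct.inl_aut]
    have := hN.conj_mem _ hs
      (SemidirectProduct.inr (Multiplicative.ofAdd (((1 : ℕ) : ZMod n))))
    rwa [← map_inv] at this
  -- find a nonzero element of S
  have hex : ∃ x : K, x ∈ S ∧ x ≠ 0 := by
    obtain ⟨g, hgN, hg1⟩ := (N.bot_or_exists_ne_one).resolve_left hbot
    by_cases hr : g.right = 1
    · refine ⟨Multiplicative.toAdd g.left, ?_, ?_⟩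
      · show SemidirectProduct.inl (Multiplicative.ofAdd (Multiplicative.toAdd g.left)) ∈ N
        rw [ofAdd_toAdd]
        have := SemidirectProduct.inl_left_mul_inr_right g
        rw [hr, map_one, mul_one] at this
        rwa [this]
      · intro h0
        apply hg1
        have hl : g.left = 1 := by
          have := congrArg Multiplicative.ofAdd h0
          rwa [ofAdd_toAdd, ofAdd_zero] at this
        have := SemidirectProduct.inl_left_mul_inr_right g
        rw [hr, hl, map_one, map_one, mul_one] at this
        exact this.symm
    · set i : ℕ := (Multiplicative.toAdd g.right).val with hidef
      have hi : ((i : ℕ) : ZMod n) = Multiplicative.toAdd g.right := by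
        simp [hidef, ZMod.natCast_val, ZMod.cast_id]
      have hi' : Multiplicative.ofAdd ((i : ℕ) : ZMod n) = g.right := by
        rw [hi]; exact ofAdd_toAdd g.right
      have hi0 : i ≠ 0 := by
        intro h0
        apply hr
        have : Multiplicative.toAdd g.right = 0 := by rw [← hi, h0, Nat.cast_zero]
        have := congrArg Multiplicative.ofAdd this
        rwa [ofAdd_toAdd, ofAdd_zero] at this
      have hζi : ζ⁻¹ ^ i ≠ 1 := by
        intro h1
        rw [inv_pow, inv_eq_one] at h1
        have hdvd : n ∣ i := hζ ▸ orderOf_dvd_of_pow_eq_one h1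
        have := Nat.le_of_dvd (Nat.pos_of_ne_zero hi0) hdvd
        exact absurd (ZMod.val_lt (Multiplicative.toAdd g.right)) (by omega)
      refine ⟨1 - ζ⁻¹ ^ i, ?_, sub_ne_zero_of_ne (Ne.symm hζi)⟩
      show SemidirectProduct.inl (Multiplicative.ofAdd (1 - ζ⁻¹ ^ i)) ∈ N
      have hmem : SemidirectProduct.inl (Multiplicative.ofAdd (1 : K)) * g *
          (SemidirectProduct.inl (Multiplicative.ofAdd (1 : K)))⁻¹ * g⁻¹ ∈ N :=
        N.mul_mem (hN.conj_mem g hgN _) (N.inv_mem hgN)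
      rw [aux_comm] at hmem
      have h2 : (Multiplicative.ofAdd (1 : K)) *
          φ g.right ((Multiplicative.ofAdd (1 : K))⁻¹) =
          Multiplicative.ofAdd (1 - ζ⁻¹ ^ i) := by
        rw [← ofAdd_neg, ← hi', hφ i (-1 : K), ← ofAdd_add]
        congr 1; ring
      rwa [h2] at hmem
  obtain ⟨x, hxS, hx0⟩ := hex
  have hall := aux_S_top p n a hp hn hcop ha K hK ζ hζ S hSζ x hxS hx0
  rintro w ⟨m, rfl⟩
  have := hall (Multiplicative.toAdd m)
  exact this
end

section
/- Let v be a real-valued valuation on a field K and let ℓ = ∑_{i=0}^n a_i T^i be monic of degree n ≥ 1 over K. An integer m with -n < m < 0 is a break of the Newton polygon of ℓ (lower convex hull of (-i, v(a_i))) if and only if the point (m, v(a_{-m})) lies on the polygon and the polygon has strictly smaller slope on [m-1,m] than on [m,m+1]. Show: if for all j with m_s ≤ j < m_{s+1} we have (v(a_{-j}) − v(a_{-m_{s+1}}))/(j − m_{s+1}) ≤ (v(a_{-m_s}) − v(a_{-m_{s+1}}))/(m_s − m_{s+1}), and for all j with m_{s+1} < j ≤ 0 the strict reverse inequality holds, then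 m_{s+1} is the smallest break of the Newton polygon strictly larger than m_s. -/
/-- Value at integer abscissa `m ∈ [-n, 0]` of the lower convex hull of the
real points `(j, P j)`, `-n ≤ j ≤ 0`. -/
noncomputable def npHullRAt (n : ℕ) (P : ℤ → ℝ) (m : ℤ) : ℝ :=
  min (P m) (sInf {y : ℝ | ∃ i₁ i₂ : ℤ, -(n : ℤ) ≤ i₁ ∧ i₁ ≤ m ∧ m ≤ i₂ ∧ i₂ ≤ 0 ∧ i₁ < i₂ ∧
    y = (((i₂ : ℝ) - (m : ℝ)) / ((i₂ : ℝ) - (i₁ : ℝ))) * P i₁ +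
        (((m : ℝ) - (i₁ : ℝ)) / ((i₂ : ℝ) - (i₁ : ℝ))) * P i₂})

/-- `m` is a break of the Newton polygon with points `(j, P j)`, `-n ≤ j ≤ 0`:
either an endpoint, or an interior integer where the slope strictly increases. -/
def IsNPBreak (n : ℕ) (P : ℤ → ℝ) (m : ℤ) : Prop :=
  m = -(n : ℤ) ∨ m = 0 ∨
    (-(n : ℤ) < m ∧ m < 0 ∧
      npHullRAt n P m - npHullRAt n P (m - 1) < npHullRAt n P (m + 1) - npHullRAt n P m)

namespace NP


noncomputable def chordVal (P : ℤ → ℝ) (i₁ i₂ m : ℤ) : ℝ :=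
  (((i₂ : ℝ) - (m : ℝ)) / ((i₂ : ℝ) - (i₁ : ℝ))) * P i₁ +
    (((m : ℝ) - (i₁ : ℝ)) / ((i₂ : ℝ) - (i₁ : ℝ))) * P i₂

def S (n : ℕ) (P : ℤ → ℝ) (m : ℤ) : Set ℝ :=
  {y : ℝ | ∃ i₁ i₂ : ℤ, -(n : ℤ) ≤ i₁ ∧ i₁ ≤ m ∧ m ≤ i₂ ∧ i₂ ≤ 0 ∧ i₁ < i₂ ∧
    y = chordVal P i₁ i₂ m}

lemma hull_eq (n : ℕ) (P : ℤ → ℝ) (m : ℤ) :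
    npHullRAt n P m = min (P m) (sInf (S n P m)) := rfl

lemma S_finite (n : ℕ) (P : ℤ → ℝ) (m : ℤ) : (S n P m).Finite := by
  apply Set.Finite.subset (Set.Finite.image (fun p : ℤ × ℤ => chordVal P p.1 p.2 m)
    ((Set.finite_Icc (-(n : ℤ)) 0).prod (Set.finite_Icc (-(n : ℤ)) 0)))
  rintro y ⟨i₁, i₂, c1, c2, c3, c4, c5, rfl⟩
  exact ⟨(i₁, i₂), ⟨Set.mem_Icc.2 ⟨c1, by omega⟩, Set.mem_Icc.2 ⟨by omega, c4⟩⟩, rfl⟩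

lemma S_nonempty {n : ℕ} (P : ℤ → ℝ) {m : ℤ} (hn : 1 ≤ n) (h1 : -(n : ℤ) ≤ m) (h2 : m ≤ 0) :
    (S n P m).Nonempty :=
  ⟨chordVal P (-(n : ℤ)) 0 m, -(n : ℤ), 0, le_rfl, h1, h2, le_rfl, by omega, rfl⟩

lemma hull_le_P (n : ℕ) (P : ℤ → ℝ) (m : ℤ) : npHullRAt n P m ≤ P m := min_le_left _ _

lemma hull_le_chord {n : ℕ} {P : ℤ → ℝ} {i₁ i₂ m : ℤ} (c1 : -(n : ℤ) ≤ i₁) (c2 : i₁ ≤ m)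
    (c3 : m ≤ i₂) (c4 : i₂ ≤ 0) (c5 : i₁ < i₂) :
    npHullRAt n P m ≤ chordVal P i₁ i₂ m := by
  rw [hull_eq]
  exact le_trans (min_le_right _ _)
    (csInf_le (S_finite n P m).bddBelow ⟨i₁, i₂, c1, c2, c3, c4, c5, rfl⟩)

lemma le_hull {n : ℕ} {P : ℤ → ℝ} {m : ℤ} {c : ℝ} (hS : (S n P m).Nonempty)
    (h1 : c ≤ P m) (h2 : ∀ y ∈ S n P m, c ≤ y) : c ≤ npHullRAt n P m := by
  rw [hull_eq]; exact le_min h1 (le_csInf hS h2)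

lemma lt_hull {n : ℕ} {P : ℤ → ℝ} {m : ℤ} {c : ℝ} (hS : (S n P m).Nonempty)
    (h1 : c < P m) (h2 : ∀ y ∈ S n P m, c < y) : c < npHullRAt n P m := by
  rw [hull_eq]; exact lt_min h1 (h2 _ (hS.csInf_mem (S_finite n P m)))

lemma hull_mem {n : ℕ} {P : ℤ → ℝ} {m : ℤ} (hS : (S n P m).Nonempty) :
    npHullRAt n P m = P m ∨ npHullRAt n P m ∈ S n P m := by
  rw [hull_eq]
  rcases le_total (P m) (sInf (S n P m)) with h | h
  · exact Or.inl (min_eq_left h)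
  · rw [min_eq_right h]; exact Or.inr (hS.csInf_mem (S_finite n P m))

lemma chordVal_left {P : ℤ → ℝ} {i₁ i₂ : ℤ} (h : (i₁ : ℝ) ≠ (i₂ : ℝ)) :
    chordVal P i₁ i₂ i₁ = P i₁ := by
  have hd : (i₂ : ℝ) - i₁ ≠ 0 := sub_ne_zero.2 h.symm
  unfold chordVal
  rw [sub_self, zero_div, zero_mul, add_zero, div_self hd, one_mul]

lemma chordVal_right {P : ℤ → ℝ} {i₁ i₂ : ℤ} (h : (i₁ : ℝ) ≠ (i₂ : ℝ)) :
    chordVal P i₁ i₂ i₂ = P i₂ := by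
  have hd : (i₂ : ℝ) - i₁ ≠ 0 := sub_ne_zero.2 h.symm
  unfold chordVal
  rw [sub_self, zero_div, zero_mul, zero_add, div_self hd, one_mul]

lemma chordVal_affine (P : ℤ → ℝ) {i₁ i₂ : ℤ} (h : (i₁ : ℝ) ≠ (i₂ : ℝ))
    {j₁ j₂ : ℤ} (h2 : (j₁ : ℝ) ≠ (j₂ : ℝ)) (m : ℤ) :
    chordVal P i₁ i₂ m =
      (((j₂ : ℝ) - (m : ℝ)) / ((j₂ : ℝ) - (j₁ : ℝ))) * chordVal P i₁ i₂ j₁ +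
        (((m : ℝ) - (j₁ : ℝ)) / ((j₂ : ℝ) - (j₁ : ℝ))) * chordVal P i₁ i₂ j₂ := by
  have hd : (i₂ : ℝ) - i₁ ≠ 0 := sub_ne_zero.2 h.symm
  have hd2 : (j₂ : ℝ) - j₁ ≠ 0 := sub_ne_zero.2 h2.symm
  unfold chordVal
  field_simp
  ring

lemma interp_mono {x₁ x₂ x y₁ y₂ z₁ z₂ : ℝ} (hlt : x₁ < x₂) (ha : x₁ ≤ x) (hb : x ≤ x₂)
    (h₁ : z₁ ≤ y₁) (h₂ : z₂ ≤ y₂) :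
    (x₂ - x) / (x₂ - x₁) * z₁ + (x - x₁) / (x₂ - x₁) * z₂ ≤
      (x₂ - x) / (x₂ - x₁) * y₁ + (x - x₁) / (x₂ - x₁) * y₂ := by
  have hd : (0 : ℝ) < x₂ - x₁ := by linarith
  exact add_le_add (mul_le_mul_of_nonneg_left h₁ (div_nonneg (by linarith) hd.le))
    (mul_le_mul_of_nonneg_left h₂ (div_nonneg (by linarith) hd.le))

lemma interp_strict {x₁ x₂ x y₁ y₂ z₁ z₂ : ℝ} (hlt : x₁ < x₂) (hax : x₁ < x) (hb : x ≤ x₂)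
    (h₁ : z₁ ≤ y₁) (h₂ : z₂ < y₂) :
    (x₂ - x) / (x₂ - x₁) * z₁ + (x - x₁) / (x₂ - x₁) * z₂ <
      (x₂ - x) / (x₂ - x₁) * y₁ + (x - x₁) / (x₂ - x₁) * y₂ := by
  have hd : (0 : ℝ) < x₂ - x₁ := by linarith
  exact add_lt_add_of_le_of_lt (mul_le_mul_of_nonneg_left h₁ (div_nonneg (by linarith) hd.le))
    (mul_lt_mul_of_pos_left h₂ (div_pos (by linarith) hd))

lemma hull_eq_P_of_break {n : ℕ} {P : ℤ → ℝ} {m : ℤ} (hn : 1 ≤ n)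
    (h1 : -(n : ℤ) < m) (h2 : m < 0)
    (hb : npHullRAt n P m - npHullRAt n P (m - 1) < npHullRAt n P (m + 1) - npHullRAt n P m) :
    npHullRAt n P m = P m := by
  rcases hull_mem (S_nonempty P hn h1.le h2.le) with h | ⟨i₁, i₂, c1, c2, c3, c4, c5, hy⟩
  · exact h
  · have hne : (i₁ : ℝ) ≠ (i₂ : ℝ) := by exact_mod_cast c5.ne
    rcases eq_or_lt_of_le c2 with rfl | hlt1
    · rw [hy, chordVal_left hne]
    · rcases eq_or_lt_of_le c3 with rfl | hlt2
      · rw [hy, chordVal_right hne]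
      · exfalso
        have hd : (i₂ : ℝ) - i₁ ≠ 0 := sub_ne_zero.2 hne.symm
        have e1 : npHullRAt n P (m - 1) ≤ chordVal P i₁ i₂ (m - 1) :=
          hull_le_chord c1 (by omega) (by omega) c4 c5
        have e2 : npHullRAt n P (m + 1) ≤ chordVal P i₁ i₂ (m + 1) :=
          hull_le_chord c1 (by omega) (by omega) c4 c5
        have e3 : chordVal P i₁ i₂ (m - 1) + chordVal P i₁ i₂ (m + 1) =
            2 * chordVal P i₁ i₂ m := by
          unfold chordVal
          push_cast
          field_simp
          ring
        linarith


end NP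

/-- Let `v` be a real-valued valuation on `K` and
`ℓ = ∑ aᵢ Tⁱ` monic of degree `n ≥ 1`, with Newton polygon the lower convex hull
of the points `(-i, v aᵢ)`.  If `m_s` is a break, every point with abscissa in
`[m_s, m_{s+1})` lies on or above the segment through `(m_s, v a_{-m_s})` and
`(m_{s+1}, v a_{-m_{s+1}})` (slope comparison `≤`), and every point with
abscissa in `(m_{s+1}, 0]` lies strictly above the corresponding line (strict
reverse slope comparison), then `m_{s+1}` is the smallest break strictly larger
than `m_s`. -/
theorem next_break_characterization
    (K : Type*) [Field K] (v : K → ℝ)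
    (hmul : ∀ x y : K, x ≠ 0 → y ≠ 0 → v (x * y) = v x + v y)
    (hadd : ∀ x y : K, x ≠ 0 → y ≠ 0 → x + y ≠ 0 → min (v x) (v y) ≤ v (x + y))
    (a : ℕ → K) (n : ℕ) (hn : 1 ≤ n) (hmonic : a n = 1)
    (P : ℤ → ℝ) (hP : P = fun m : ℤ => v (a m.natAbs))
    (ms ms1 : ℤ) (h1 : -(n : ℤ) ≤ ms) (h2 : ms < ms1) (h3 : ms1 ≤ 0)
    (hbreak : IsNPBreak n P ms)
    (hyp1 : ∀ j : ℤ, ms ≤ j → j < ms1 →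
      (P j - P ms1) / ((j : ℝ) - (ms1 : ℝ)) ≤ (P ms - P ms1) / ((ms : ℝ) - (ms1 : ℝ)))
    (hyp2 : ∀ j : ℤ, ms1 < j → j ≤ 0 →
      (P ms - P ms1) / ((ms : ℝ) - (ms1 : ℝ)) < (P j - P ms1) / ((j : ℝ) - (ms1 : ℝ))) :
    IsNPBreak n P ms1 ∧ ∀ j : ℤ, ms < j → j < ms1 → ¬ IsNPBreak n P j := by
  set slope : ℝ := (P ms - P ms1) / ((ms : ℝ) - (ms1 : ℝ)) with hslope
  set L : ℝ → ℝ := fun x => P ms1 + slope * (x - (ms1 : ℝ)) with hL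
  have hcast : (ms : ℝ) < (ms1 : ℝ) := by exact_mod_cast h2
  have hd : (ms : ℝ) - (ms1 : ℝ) ≠ 0 := by intro h; linarith [sub_eq_zero.mp h]
  have Lms : L (ms : ℝ) = P ms := by
    simp only [hL]
    rw [hslope, div_mul_cancel₀ _ hd]; ring
  have Lms1 : L (ms1 : ℝ) = P ms1 := by simp only [hL]; ring
  have Linterp : ∀ x₁ x₂ x : ℝ, x₁ ≠ x₂ →
      (x₂ - x) / (x₂ - x₁) * L x₁ + (x - x₁) / (x₂ - x₁) * L x₂ = L x := by
    intro x₁ x₂ x h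
    have hd2 : x₂ - x₁ ≠ 0 := sub_ne_zero.2 (Ne.symm h)
    simp only [hL]
    field_simp
    ring
  have PgeL : ∀ j : ℤ, ms ≤ j → j ≤ 0 → L (j : ℝ) ≤ P j := by
    intro j hj1 hj2
    rcases lt_trichotomy j ms1 with h | h | h
    · have hth := hyp1 j hj1 h
      have hjne : (j : ℝ) - (ms1 : ℝ) < 0 := by
        have : (j : ℝ) < (ms1 : ℝ) := by exact_mod_cast h
        linarith
      rw [div_le_iff_of_neg hjne] at hth
      simp only [hL]; linarith
    · subst h; rw [Lms1]
    · have hth := hyp2 j h hj2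
      have hjpos : (0 : ℝ) < (j : ℝ) - (ms1 : ℝ) := by
        have : (ms1 : ℝ) < (j : ℝ) := by exact_mod_cast h
        linarith
      rw [lt_div_iff₀ hjpos] at hth
      simp only [hL]; linarith
  have PgtL : ∀ j : ℤ, ms1 < j → j ≤ 0 → L (j : ℝ) < P j := by
    intro j h hj2
    have hth := hyp2 j h hj2
    have hjpos : (0 : ℝ) < (j : ℝ) - (ms1 : ℝ) := by
      have : (ms1 : ℝ) < (j : ℝ) := by exact_mod_cast h
      linarith
    rw [lt_div_iff₀ hjpos] at hth
    simp only [hL]; linarith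
  have chord_msms1 : ∀ m : ℤ, NP.chordVal P ms ms1 m = L (m : ℝ) := by
    intro m
    have := Linterp (ms : ℝ) (ms1 : ℝ) (m : ℝ) hcast.ne
    rw [Lms, Lms1] at this
    exact this
  have HL : -(n : ℤ) < ms → L ((ms - 1 : ℤ) : ℝ) < npHullRAt n P (ms - 1) := by
    intro hms
    rcases hbreak with h | h | ⟨hb1, hb2, hb3⟩
    · omega
    · omega
    · have hPms : npHullRAt n P ms = P ms := NP.hull_eq_P_of_break hn hb1 hb2 hb3
      have hms1le : npHullRAt n P (ms + 1) ≤ L ((ms + 1 : ℤ) : ℝ) := by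
        have hc := NP.hull_le_chord (n := n) (P := P) (i₁ := ms) (i₂ := ms1) (m := ms + 1)
          h1 (by omega) (by omega) h3 h2
        rw [chord_msms1 (ms + 1)] at hc
        exact hc
      have laff : L ((ms - 1 : ℤ) : ℝ) + L ((ms + 1 : ℤ) : ℝ) = 2 * L (ms : ℝ) := by
        simp only [hL]; push_cast; ring
      rw [hPms] at hb3
      rw [Lms] at laff
      linarith
  have key_chord : ∀ m i₁ i₂ : ℤ, ms ≤ m → -(n : ℤ) ≤ i₁ → i₁ ≤ m → m ≤ i₂ → i₂ ≤ 0 →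
      i₁ < i₂ →
      L (m : ℝ) ≤ NP.chordVal P i₁ i₂ m ∧ (ms1 < m → L (m : ℝ) < NP.chordVal P i₁ i₂ m) := by
    intro m i₁ i₂ hm hi1 hi2 hi3 hi4 hi5
    have hdi : (i₁ : ℝ) < (i₂ : ℝ) := by exact_mod_cast hi5
    have hi2le0 : i₂ ≤ 0 := hi4
    have hPi2 : L (i₂ : ℝ) ≤ P i₂ := PgeL i₂ (le_trans hm hi3) hi4
    rcases lt_or_ge i₁ ms with hcase | hcase
    · -- chord starts left of ms
      have hms : -(n : ℤ) < ms := lt_of_le_of_lt hi1 hcase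
      have hHL := HL hms
      have hC1 : L ((ms - 1 : ℤ) : ℝ) < NP.chordVal P i₁ i₂ (ms - 1) :=
        lt_of_lt_of_le hHL (NP.hull_le_chord hi1 (by omega) (by omega) hi4 hi5)
      have hms1ne : ((ms - 1 : ℤ) : ℝ) ≠ (i₂ : ℝ) := by
        have : ms - 1 < i₂ := by omega
        exact_mod_cast this.ne
      have hrep := NP.chordVal_affine P hdi.ne hms1ne m
      have hCr : NP.chordVal P i₁ i₂ i₂ = P i₂ := NP.chordVal_right hdi.ne
      rw [hCr] at hrep
      have hx1 : ((ms - 1 : ℤ) : ℝ) < (i₂ : ℝ) := by exact_mod_cast (by omega : ms - 1 < i₂)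
      have hx2 : ((ms - 1 : ℤ) : ℝ) < (m : ℝ) := by exact_mod_cast (by omega : ms - 1 < m)
      have hx3 : (m : ℝ) ≤ (i₂ : ℝ) := by exact_mod_cast hi3
      have hLm := Linterp ((ms - 1 : ℤ) : ℝ) (i₂ : ℝ) (m : ℝ) hms1ne
      constructor
      · rw [hrep, ← hLm]
        exact NP.interp_mono hx1 hx2.le hx3 hC1.le hPi2
      · intro hms1m
        have hPgt : L (i₂ : ℝ) < P i₂ := PgtL i₂ (lt_of_lt_of_le hms1m hi3) hi4
        rw [hrep, ← hLm]
        exact NP.interp_strict hx1 hx2 hx3 hC1.le hPgt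
    · -- chord starts at or right of ms
      have hPi1 : L (i₁ : ℝ) ≤ P i₁ := PgeL i₁ hcase (by omega)
      have hLm := Linterp (i₁ : ℝ) (i₂ : ℝ) (m : ℝ) hdi.ne
      have hx2 : (i₁ : ℝ) ≤ (m : ℝ) := by exact_mod_cast hi2
      have hx3 : (m : ℝ) ≤ (i₂ : ℝ) := by exact_mod_cast hi3
      constructor
      · rw [← hLm]
        exact NP.interp_mono hdi hx2 hx3 hPi1 hPi2
      · intro hms1m
        have hPgt : L (i₂ : ℝ) < P i₂ := PgtL i₂ (lt_of_lt_of_le hms1m hi3) hi4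
        rcases eq_or_lt_of_le hi2 with rfl | hlt
        · rw [NP.chordVal_left hdi.ne]
          exact PgtL i₁ hms1m (by omega)
        · have hx2' : (i₁ : ℝ) < (m : ℝ) := by exact_mod_cast hlt
          rw [← hLm]
          exact NP.interp_strict hdi hx2' hx3 hPi1 hPgt
  have keyle : ∀ m : ℤ, ms ≤ m → m ≤ 0 → L (m : ℝ) ≤ npHullRAt n P m := by
    intro m hm1 hm2
    apply NP.le_hull (NP.S_nonempty P hn (by omega) hm2) (PgeL m hm1 hm2)
    rintro y ⟨i₁, i₂, c1, c2, c3, c4, c5, rfl⟩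
    exact (key_chord m i₁ i₂ hm1 c1 c2 c3 c4 c5).1
  have keylt : ∀ m : ℤ, ms1 < m → m ≤ 0 → L (m : ℝ) < npHullRAt n P m := by
    intro m hm1 hm2
    apply NP.lt_hull (NP.S_nonempty P hn (by omega) hm2) (PgtL m hm1 hm2)
    rintro y ⟨i₁, i₂, c1, c2, c3, c4, c5, rfl⟩
    exact (key_chord m i₁ i₂ (by omega) c1 c2 c3 c4 c5).2 hm1
  have keyeq : ∀ m : ℤ, ms ≤ m → m ≤ ms1 → npHullRAt n P m = L (m : ℝ) := by
    intro m hm1 hm2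
    refine le_antisymm ?_ (keyle m hm1 (le_trans hm2 h3))
    have hc := NP.hull_le_chord (n := n) (P := P) (i₁ := ms) (i₂ := ms1) (m := m)
      h1 hm1 hm2 h3 h2
    rw [chord_msms1 m] at hc
    exact hc
  constructor
  · rcases eq_or_lt_of_le h3 with h0 | h0
    · exact Or.inr (Or.inl h0)
    · refine Or.inr (Or.inr ⟨by omega, h0, ?_⟩)
      have e1 := keyeq ms1 h2.le le_rfl
      have e2 := keyeq (ms1 - 1) (by omega) (by omega)
      have e3 := keylt (ms1 + 1) (by omega) (by omega)
      have l1 : L ((ms1 : ℤ) : ℝ) - L ((ms1 - 1 : ℤ) : ℝ) = slope := by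
        simp only [hL]; push_cast; ring
      have l2 : L ((ms1 + 1 : ℤ) : ℝ) - L ((ms1 : ℤ) : ℝ) = slope := by
        simp only [hL]; push_cast; ring
      rw [e1, e2]
      linarith
  · intro j hj1 hj2 hb
    rcases hb with hb | hb | ⟨_, _, hlt⟩
    · omega
    · omega
    · have e1 := keyeq j (by omega) (by omega)
      have e2 := keyeq (j - 1) (by omega) (by omega)
      have e3 := keyeq (j + 1) (by omega) (by omega)
      have l1 : L ((j : ℤ) : ℝ) - L ((j - 1 : ℤ) : ℝ) = slope := by
        simp only [hL]; push_cast; ring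
      have l2 : L ((j + 1 : ℤ) : ℝ) - L ((j : ℤ) : ℝ) = slope := by
        simp only [hL]; push_cast; ring
      rw [e1, e2, e3] at hlt
      linarith
end
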